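/- Let H = H_X × H_Z be a subsystem CSS code in G × G with H ≠ H + H^ω. Define d^{H_X} to be the minimum Hamming weight of an element of (H_X + H_Z^θ) \ H_X, and d^{H_Z} the minimum Hamming weight of an element of (H_Z + H_X^θ) \ H_Z (both sets are nonempty). Then the minimum symplectic weight of an element of (H + H^ω) \ H equals min{d^{H_X}, d^{H_Z}}. -/

import Mathlib

open Finset

/-- Orthogonal complement of a submodule with respect to a bilinear form:
`ortho ξ H = {v | ξ(v,h) = 0 for all h ∈ H}`. -/
def ortho {K V : Type*} [CommSemiring K] [AddCommMonoid V] [Module K V]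
    (ξ : V →ₗ[K] V →ₗ[K] K) (H : Submodule K V) : Submodule K V :=
  ⨅ h ∈ H, LinearMap.ker (ξ.flip h)

/-- The dot product `θ(a,b) = ∑ j, a j * b j` as a bilinear form on `Fin n → ZMod p`. -/
def dotB (p n : ℕ) : (Fin n → ZMod p) →ₗ[ZMod p] (Fin n → ZMod p) →ₗ[ZMod p] ZMod p :=
  LinearMap.mk₂ (ZMod p) (fun a b => ∑ j, a j * b j)
    (fun a a' b => by simp [add_mul, Finset.sum_add_distrib])
    (fun c a b => by simp [Finset.mul_sum, mul_assoc])
    (fun a b b' => by simp [mul_add, Finset.sum_add_distrib])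
    (fun c a b => by simp [Finset.mul_sum, mul_left_comm])

/-- The symmetric form on `V × V` induced by a bilinear form `B` on `V`:
`(v,w) ↦ B v.1 w.1 + B v.2 w.2`. -/
def sumB {K V : Type*} [CommRing K] [AddCommGroup V] [Module K V]
    (B : V →ₗ[K] V →ₗ[K] K) : (V × V) →ₗ[K] (V × V) →ₗ[K] K :=
  LinearMap.mk₂ K (fun v w => B v.1 w.1 + B v.2 w.2)
    (fun v v' w => by simp; ring)
    (fun c v w => by simp; ring)
    (fun v w w' => by simp; ring)
    (fun c v w => by simp; ring)

/-- The symplectic form on `V × V` induced by a symmetric bilinear form `B` on `V`: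
`(v,w) ↦ B v.2 w.1 - B v.1 w.2`. -/
def sympB {K V : Type*} [CommRing K] [AddCommGroup V] [Module K V]
    (B : V →ₗ[K] V →ₗ[K] K) : (V × V) →ₗ[K] (V × V) →ₗ[K] K :=
  LinearMap.mk₂ K (fun v w => B v.2 w.1 - B v.1 w.2)
    (fun v v' w => by simp; ring)
    (fun c v w => by simp; ring)
    (fun v w w' => by simp; ring)
    (fun c v w => by simp; ring)

/-- Hamming weight of a vector in `Fin n → ZMod p`. -/
def hwt {p n : ℕ} (a : Fin n → ZMod p) : ℕ :=
  (Finset.univ.filter fun j => a j ≠ 0).card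

/-- Symplectic weight of a vector in `(Fin n → ZMod p) × (Fin n → ZMod p)`. -/
def swt {p n : ℕ} (v : (Fin n → ZMod p) × (Fin n → ZMod p)) : ℕ :=
  (Finset.univ.filter fun j => ¬(v.1 j = 0 ∧ v.2 j = 0)).card

/-- for a subsystem CSS code `H = H_X × H_Z` with `H ≠ H ⊔ H^ω`, the sets
`(H_X ⊔ H_Z^θ) \ H_X` and `(H_Z ⊔ H_X^θ) \ H_Z` are nonempty, and the minimum symplectic
weight over `(H ⊔ H^ω) \ H` equals `min d^{H_X} d^{H_Z}`, the minimum Hamming weights over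
the two classical sets. -/
lemma mem_ortho {K V : Type*} [CommSemiring K] [AddCommMonoid V] [Module K V]
    (ξ : V →ₗ[K] V →ₗ[K] K) (H : Submodule K V) (v : V) :
    v ∈ ortho ξ H ↔ ∀ h ∈ H, ξ v h = 0 := by
  simp [ortho]

lemma dot_symm (p n : ℕ) (a b : Fin n → ZMod p) : dotB p n a b = dotB p n b a := by
  simp [dotB, mul_comm]

lemma dot_nondeg (p n : ℕ) : LinearMap.BilinForm.Nondegenerate (dotB p n) := by
  refine (LinearMap.IsRefl.nondegenerate_iff_separatingLeft
    (fun a b h => by rw [← dot_symm]; exact h)).mpr ?_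
  intro a h
  funext j
  have := h (Pi.single j 1)
  simpa [dotB, Pi.single_apply, mul_comm] using this

lemma dot_refl (p n : ℕ) : LinearMap.IsRefl (dotB p n) := by
  intro a b h
  rw [← dot_symm]; exact h

lemma ortho_eq (p n : ℕ) (H : Submodule (ZMod p) (Fin n → ZMod p)) :
    ortho (dotB p n) H = LinearMap.BilinForm.orthogonal (dotB p n) H := by
  ext v
  simp only [mem_ortho, LinearMap.BilinForm.mem_orthogonal_iff, LinearMap.BilinForm.IsOrtho]
  constructor
  · intro h x hx; rw [dot_symm]; exact h x hx
  · intro h x hx; rw [dot_symm]; exact h x hx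

lemma ortho_ortho (p n : ℕ) [Fact p.Prime] (H : Submodule (ZMod p) (Fin n → ZMod p)) :
    ortho (dotB p n) (ortho (dotB p n) H) = H := by
  rw [ortho_eq, ortho_eq]
  exact LinearMap.BilinForm.orthogonal_orthogonal (dot_nondeg p n) (dot_refl p n) H

lemma ortho_symp_prod (p n : ℕ) (HX HZ : Submodule (ZMod p) (Fin n → ZMod p)) :
    ortho (sympB (dotB p n)) (HX.prod HZ) = (ortho (dotB p n) HZ).prod (ortho (dotB p n) HX) := by
  ext ⟨a, b⟩
  simp only [mem_ortho, Submodule.mem_prod]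
  constructor
  · intro h
    constructor
    · intro d hd
      have := h (0, d) (by simp [Submodule.mem_prod, hd])
      simpa [sympB, sub_eq_zero] using this.symm
    · intro c hc
      have := h (c, 0) (by simp [Submodule.mem_prod, hc])
      simpa [sympB, sub_eq_zero] using this
  · rintro ⟨ha, hb⟩ ⟨c, d⟩ hcd
    simp only [Submodule.mem_prod] at hcd
    simp [sympB, hb c hcd.1, ha d hcd.2]

lemma ortho_anti {K V : Type*} [CommSemiring K] [AddCommMonoid V] [Module K V]
    (ξ : V →ₗ[K] V →ₗ[K] K) {S T : Submodule K V} (h : S ≤ T) :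
    ortho ξ T ≤ ortho ξ S := by
  intro v hv
  rw [mem_ortho] at hv ⊢
  exact fun s hs => hv s (h hs)

lemma swt_fst {p n : ℕ} (a : Fin n → ZMod p) : swt (a, (0 : Fin n → ZMod p)) = hwt a := by
  simp [swt, hwt]

lemma swt_snd {p n : ℕ} (b : Fin n → ZMod p) : swt ((0 : Fin n → ZMod p), b) = hwt b := by
  simp [swt, hwt]

lemma hwt_fst_le {p n : ℕ} (v : (Fin n → ZMod p) × (Fin n → ZMod p)) : hwt v.1 ≤ swt v := by
  apply Finset.card_le_card
  intro j hj
  simp only [Finset.mem_filter, Finset.mem_univ, true_and] at hj ⊢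
  tauto

lemma hwt_snd_le {p n : ℕ} (v : (Fin n → ZMod p) × (Fin n → ZMod p)) : hwt v.2 ≤ swt v := by
  apply Finset.card_le_card
  intro j hj
  simp only [Finset.mem_filter, Finset.mem_univ, true_and] at hj ⊢
  tauto

theorem stmt3 (p n : ℕ) [Fact p.Prime]
    (HX HZ : Submodule (ZMod p) (Fin n → ZMod p))
    (hne : HX.prod HZ ≠ HX.prod HZ ⊔ ortho (sympB (dotB p n)) (HX.prod HZ)) :
    (∃ a, a ∈ HX ⊔ ortho (dotB p n) HZ ∧ a ∉ HX) ∧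
    (∃ b, b ∈ HZ ⊔ ortho (dotB p n) HX ∧ b ∉ HZ) ∧
    sInf {w | ∃ v, v ∈ HX.prod HZ ⊔ ortho (sympB (dotB p n)) (HX.prod HZ) ∧
        v ∉ HX.prod HZ ∧ swt v = w}
      = min (sInf {w | ∃ a, a ∈ HX ⊔ ortho (dotB p n) HZ ∧ a ∉ HX ∧ hwt a = w})
            (sInf {w | ∃ b, b ∈ HZ ⊔ ortho (dotB p n) HX ∧ b ∉ HZ ∧ hwt b = w}) := by
  have hsup : HX.prod HZ ⊔ ortho (sympB (dotB p n)) (HX.prod HZ)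
      = (HX ⊔ ortho (dotB p n) HZ).prod (HZ ⊔ ortho (dotB p n) HX) := by
    rw [ortho_symp_prod, Submodule.prod_sup_prod]
  set A := HX ⊔ ortho (dotB p n) HZ with hAdef
  set B := HZ ⊔ ortho (dotB p n) HX with hBdef
  have hAB : A = HX → B = HZ := by
    intro h
    have h1 : ortho (dotB p n) HZ ≤ HX := le_sup_right.trans h.le
    have h2 : ortho (dotB p n) HX ≤ HZ := by
      have := ortho_anti (dotB p n) h1
      rwa [ortho_ortho] at this
    exact sup_eq_left.mpr h2
  have hBA : B = HZ → A = HX := by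
    intro h
    have h1 : ortho (dotB p n) HX ≤ HZ := le_sup_right.trans h.le
    have h2 : ortho (dotB p n) HZ ≤ HX := by
      have := ortho_anti (dotB p n) h1
      rwa [ortho_ortho] at this
    exact sup_eq_left.mpr h2
  have hA : A ≠ HX := by
    intro h
    apply hne
    rw [hsup, h, hAB h]
  have hB : B ≠ HZ := fun h => hA (hBA h)
  obtain ⟨a0, ha0A, ha0X⟩ := SetLike.exists_of_lt (lt_of_le_of_ne le_sup_left hA.symm :
    HX < A)
  obtain ⟨b0, hb0B, hb0Z⟩ := SetLike.exists_of_lt (lt_of_le_of_ne le_sup_left hB.symm :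
    HZ < B)
  refine ⟨⟨a0, ha0A, ha0X⟩, ⟨b0, hb0B, hb0Z⟩, ?_⟩
  rw [hsup]
  set SA := {w | ∃ a, a ∈ A ∧ a ∉ HX ∧ hwt a = w} with hSAdef
  set SB := {w | ∃ b, b ∈ B ∧ b ∉ HZ ∧ hwt b = w} with hSBdef
  set S := {w | ∃ v, v ∈ A.prod B ∧ v ∉ HX.prod HZ ∧ swt v = w} with hSdef
  have hSA : SA.Nonempty := ⟨hwt a0, a0, ha0A, ha0X, rfl⟩
  have hSB : SB.Nonempty := ⟨hwt b0, b0, hb0B, hb0Z, rfl⟩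
  have hS : S.Nonempty := by
    refine ⟨swt (a0, 0), (a0, 0), Submodule.mem_prod.mpr ⟨ha0A, B.zero_mem⟩, ?_, rfl⟩
    intro h
    exact ha0X (Submodule.mem_prod.mp h).1
  apply le_antisymm
  · apply le_min
    · obtain ⟨a, haA, haX, hwa⟩ := Nat.sInf_mem hSA
      refine hwa ▸ Nat.sInf_le ⟨(a, 0), Submodule.mem_prod.mpr ⟨haA, B.zero_mem⟩, ?_, swt_fst a⟩
      intro h
      exact haX (Submodule.mem_prod.mp h).1
    · obtain ⟨b, hbB, hbZ, hwb⟩ := Nat.sInf_mem hSB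
      refine hwb ▸ Nat.sInf_le ⟨(0, b), Submodule.mem_prod.mpr ⟨A.zero_mem, hbB⟩, ?_, swt_snd b⟩
      intro h
      exact hbZ (Submodule.mem_prod.mp h).2
  · obtain ⟨v, hv, hvn, hw⟩ := Nat.sInf_mem hS
    obtain ⟨hv1, hv2⟩ := Submodule.mem_prod.mp hv
    by_cases h1 : v.1 ∈ HX
    · have h2 : v.2 ∉ HZ := fun h2 => hvn (Submodule.mem_prod.mpr ⟨h1, h2⟩)
      calc min (sInf SA) (sInf SB) ≤ sInf SB := min_le_right _ _
        _ ≤ hwt v.2 := Nat.sInf_le ⟨v.2, hv2, h2, rfl⟩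
        _ ≤ swt v := hwt_snd_le v
        _ = sInf S := hw
    · calc min (sInf SA) (sInf SB) ≤ sInf SA := min_le_left _ _
        _ ≤ hwt v.1 := Nat.sInf_le ⟨v.1, hv1, h1, rfl⟩
        _ ≤ swt v := hwt_fst_le v
        _ = sInf S := hw
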